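/- Let b, c, x₃ be complex numbers with bc ≠ 0. The 9×9 matrix given in block form [1], [[1,0],[0,1]], [[1−bc, 0, −b²],[x₃c/b, 1, x₃],[−c/b, 0, 0]], [[1−bc, b],[c, 0]], [−bc] satisfies the braid relation, and has eigenvalue −bc with multiplicity 3 and eigenvalue 1 with multiplicity 6. -/
import Mathlib


open Matrix Polynomial

noncomputable section

/-- `R̂ ⊗ 1` acting on `V ⊗ V ⊗ V` with `V = ℂ^3`. -/
def R1 (R : Matrix (Fin 3 × Fin 3) (Fin 3 × Fin 3) ℂ) :
    Matrix (Fin 3 × Fin 3 × Fin 3) (Fin 3 × Fin 3 × Fin 3) ℂ :=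
  fun p q => R (p.1, p.2.1) (q.1, q.2.1) * (if p.2.2 = q.2.2 then 1 else 0)

/-- `1 ⊗ R̂` acting on `V ⊗ V ⊗ V` with `V = ℂ^3`. -/
def R2 (R : Matrix (Fin 3 × Fin 3) (Fin 3 × Fin 3) ℂ) :
    Matrix (Fin 3 × Fin 3 × Fin 3) (Fin 3 × Fin 3 × Fin 3) ℂ :=
  fun p q => (if p.1 = q.1 then 1 else 0) * R (p.2.1, p.2.2) (q.2.1, q.2.2)

/-- The braid relation `R̂₁R̂₂R̂₁ = R̂₂R̂₁R̂₂`. -/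
def Braid (R : Matrix (Fin 3 × Fin 3) (Fin 3 × Fin 3) ℂ) : Prop :=
  R1 R * R2 R * R1 R = R2 R * R1 R * R2 R

/-- position within the charge-1 sector: |10⟩, |01⟩. -/
def f1 (p : Fin 3 × Fin 3) : Fin 2 := if p = (1, 0) then 0 else 1

/-- position within the charge-2 sector: |20⟩, |11⟩, |02⟩. -/
def f2 (p : Fin 3 × Fin 3) : Fin 3 := if p = (2, 0) then 0 else if p = (1, 1) then 1 else 2

/-- position within the charge-3 sector: |21⟩, |12⟩. -/
def f3 (p : Fin 3 × Fin 3) : Fin 2 := if p = (2, 1) then 0 else 1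

/-- The 9×9 matrix with blocks of sizes 1,2,3,2,1 on the graded basis
|00⟩,|10⟩,|01⟩,|20⟩,|11⟩,|02⟩,|21⟩,|12⟩,|22⟩. -/
def blockR (b0 : ℂ) (B1 : Matrix (Fin 2) (Fin 2) ℂ) (B2 : Matrix (Fin 3) (Fin 3) ℂ)
    (B3 : Matrix (Fin 2) (Fin 2) ℂ) (b4 : ℂ) : Matrix (Fin 3 × Fin 3) (Fin 3 × Fin 3) ℂ :=
  fun p q =>
    if (p.1 : ℕ) + (p.2 : ℕ) ≠ (q.1 : ℕ) + (q.2 : ℕ) then 0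
    else if (p.1 : ℕ) + (p.2 : ℕ) = 0 then b0
    else if (p.1 : ℕ) + (p.2 : ℕ) = 1 then B1 (f1 p) (f1 q)
    else if (p.1 : ℕ) + (p.2 : ℕ) = 2 then B2 (f2 p) (f2 q)
    else if (p.1 : ℕ) + (p.2 : ℕ) = 3 then B3 (f3 p) (f3 q)
    else b4


section Aux

lemma lhs_eq (R : Matrix (Fin 3 × Fin 3) (Fin 3 × Fin 3) ℂ) (p q : Fin 3 × Fin 3 × Fin 3) :
    (R1 R * R2 R * R1 R) p q
      = ∑ x : Fin 3, ∑ x_1 : Fin 3, ∑ x_2 : Fin 3,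
          R (p.1, p.2.1) (x, x_2) * R (x_2, p.2.2) (x_1, q.2.2) * R (x, x_1) (q.1, q.2.1) := by
  simp only [Matrix.mul_apply, R1, R2, Fintype.sum_prod_type, mul_ite, ite_mul, mul_one, one_mul,
    mul_zero, zero_mul, Finset.sum_ite_eq, Finset.sum_ite_eq', Finset.mem_univ, if_true,
    Finset.sum_mul, Finset.mul_sum, Finset.sum_ite_irrel, Finset.sum_const_zero]

lemma rhs_eq (R : Matrix (Fin 3 × Fin 3) (Fin 3 × Fin 3) ℂ) (p q : Fin 3 × Fin 3 × Fin 3) :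
    (R2 R * R1 R * R2 R) p q
      = ∑ x : Fin 3, ∑ x_1 : Fin 3, ∑ x_2 : Fin 3,
          R (p.2.1, p.2.2) (x_2, x_1) * R (p.1, x_2) (q.1, x) * R (x, x_1) (q.2.1, q.2.2) := by
  simp only [Matrix.mul_apply, R1, R2, Fintype.sum_prod_type, mul_ite, ite_mul, mul_one, one_mul,
    mul_zero, zero_mul, Finset.sum_ite_eq, Finset.sum_ite_eq', Finset.mem_univ, if_true,
    Finset.sum_mul, Finset.mul_sum, Finset.sum_ite_irrel, Finset.sum_const_zero]

/-- entries of the solution 5.2.2 matrix, with `c = b * u`. -/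
def T (b u x3 : ℂ) : Fin 3 → Fin 3 → Fin 3 → Fin 3 → ℂ :=
![![![![1,0,0],![0,0,0],![0,0,0]],
   ![![0,1,0],![0,0,0],![0,0,0]],
   ![![0,0,0],![0,0,0],![-u,0,0]]],
  ![![![0,0,0],![1,0,0],![0,0,0]],
   ![![0,0,x3],![0,1,0],![x3*u,0,0]],
   ![![0,0,0],![0,0,0],![0,b*u,0]]],
  ![![![0,0,-b^2],![0,0,0],![1-u*b^2,0,0]],
   ![![0,0,0],![0,0,b],![0,1-u*b^2,0]],
   ![![0,0,0],![0,0,0],![0,0,-u*b^2]]]]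

def Rf (b u x3 : ℂ) : Matrix (Fin 3 × Fin 3) (Fin 3 × Fin 3) ℂ :=
  fun p q => T b u x3 p.1 p.2 q.1 q.2

lemma hRblock (b u x3 : ℂ) (hb : b ≠ 0) :
    blockR 1 1
      !![1 - b * (b * u), 0, -b ^ 2; x3 * (b * u) / b, 1, x3; -(b * u / b), 0, 0]
      !![1 - b * (b * u), b; b * u, 0] (-(b * (b * u))) = Rf b u x3 := by
  ext ⟨i, j⟩ ⟨k, l⟩
  fin_cases i <;> fin_cases j <;> fin_cases k <;> fin_cases l <;>
    · simp [blockR, f1, f2, f3, Rf, T, Prod.ext_iff, Fin.ext_iff, Matrix.vecHead, Matrix.vecTail]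
      try field_simp
      try ring

set_option maxHeartbeats 0 in
lemma braidRf (b u x3 : ℂ) :
    R1 (Rf b u x3) * R2 (Rf b u x3) * R1 (Rf b u x3)
      = R2 (Rf b u x3) * R1 (Rf b u x3) * R2 (Rf b u x3) := by
  ext ⟨i, j, k⟩ ⟨l, m, n⟩
  rw [lhs_eq, rhs_eq]
  fin_cases i <;> fin_cases j <;> fin_cases k <;> fin_cases l <;> fin_cases m <;> fin_cases n <;>
  · simp [Rf, T, Fin.sum_univ_succ, Matrix.vecHead, Matrix.vecTail]
    try ring

def MS (b u x3 : ℂ) : Matrix (Fin 3 ⊕ Fin 3 ⊕ Fin 3) (Fin 3 ⊕ Fin 3 ⊕ Fin 3) ℂ :=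
  fromBlocks 1 0 0 (fromBlocks
    !![1-u*b^2,0,-b^2; x3*u,1,x3; -u,0,0] 0 0
    !![1-u*b^2,b,0; b*u,0,0; 0,0,-u*b^2])

def e2 : (Fin 3 ⊕ Fin 3 ⊕ Fin 3) ≃ (Fin 3 × Fin 3) where
  toFun := Sum.elim ![(0,0),(1,0),(0,1)] (Sum.elim ![(2,0),(1,1),(0,2)] ![(2,1),(1,2),(2,2)])
  invFun p := ![![Sum.inl 0, Sum.inl 2, Sum.inr (Sum.inl 2)],
                ![Sum.inl 1, Sum.inr (Sum.inl 1), Sum.inr (Sum.inr 1)],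
                ![Sum.inr (Sum.inl 0), Sum.inr (Sum.inr 0), Sum.inr (Sum.inr 2)]] p.1 p.2
  left_inv := by decide
  right_inv := by decide

set_option maxHeartbeats 1000000 in
lemma cp3 (a00 a01 a02 a10 a11 a12 a20 a21 a22 : ℂ) :
    (!![a00,a01,a02;a10,a11,a12;a20,a21,a22]).charpoly
      = (X - C a00) * (X - C a11) * (X - C a22)
        - C a12 * C a21 * (X - C a00) - C a01 * C a10 * (X - C a22)
        - C a02 * C a20 * (X - C a11)
        - C (a01 * a12 * a20) - C (a02 * a10 * a21) := by
  rw [Matrix.charpoly]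
  have hC : charmatrix (!![a00,a01,a02;a10,a11,a12;a20,a21,a22])
      = !![X - C a00, -C a01, -C a02; -C a10, X - C a11, -C a12; -C a20, -C a21, X - C a22] := by
    ext i j
    fin_cases i <;> fin_cases j <;>
      simp [charmatrix_apply, Matrix.diagonal_apply, Matrix.vecHead, Matrix.vecTail]
  rw [hC, Matrix.det_fin_three]
  simp [Matrix.vecHead, Matrix.vecTail, _root_.map_mul]
  ring

set_option maxHeartbeats 1000000 in
lemma hRe (b u x3 : ℂ) : Rf b u x3 = reindex e2 e2 (MS b u x3) := by
  ext ⟨i, j⟩ ⟨k, l⟩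
  fin_cases i <;> fin_cases j <;> fin_cases k <;> fin_cases l <;>
    simp [Rf, T, MS, e2, Matrix.fromBlocks, Matrix.one_apply, Matrix.vecHead, Matrix.vecTail]

set_option maxHeartbeats 1000000 in
lemma cpRf (b u x3 : ℂ) :
    (Rf b u x3).charpoly = (X - C 1) ^ 6 * (X + C (b * (b * u))) ^ 3 := by
  rw [hRe, Matrix.charpoly_reindex, MS, Matrix.charpoly_fromBlocks_zero₂₁,
    Matrix.charpoly_fromBlocks_zero₂₁]
  have h1 : (1 : Matrix (Fin 3) (Fin 3) ℂ) = !![1,0,0;0,1,0;0,0,1] := by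
    ext i j
    fin_cases i <;> fin_cases j <;> simp [Matrix.one_apply, Matrix.vecHead, Matrix.vecTail]
  rw [h1, cp3, cp3, cp3]
  simp only [_root_.map_mul, _root_.map_sub, _root_.map_add, _root_.map_one, _root_.map_neg,
    _root_.map_pow, map_zero, _root_.map_ofNat]
  ring

end Aux

/-- solution 5.2.2 satisfies the braid relation, with eigenvalue −bc of
multiplicity 3 and eigenvalue 1 of multiplicity 6. -/
theorem sol522 (b c x3 : ℂ) (hbc : b * c ≠ 0) :
    Braid (blockR 1 1
      !![1 - b * c, 0, -b ^ 2; x3 * c / b, 1, x3; -(c / b), 0, 0]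
      !![1 - b * c, b; c, 0] (-(b * c))) ∧
    (blockR 1 1
      !![1 - b * c, 0, -b ^ 2; x3 * c / b, 1, x3; -(c / b), 0, 0]
      !![1 - b * c, b; c, 0] (-(b * c))).charpoly
      = (X - C 1) ^ 6 * (X + C (b * c)) ^ 3 := by
  have hb : b ≠ 0 := fun h => hbc (by simp [h])
  obtain ⟨u, rfl⟩ : ∃ u, c = b * u := ⟨c / b, by field_simp⟩
  rw [hRblock b u x3 hb]
  exact ⟨braidRf b u x3, by rw [cpRf]⟩
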